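/- The image Y₀ = p(ℝ^d) is a closed subset of ℝ^m. -/

import Mathlib

open Matrix MvPolynomial

noncomputable section

/-- Action of an invertible real matrix on a vector in `ℝ^d`. -/
def act {d : ℕ} (g : GL (Fin d) ℝ) (v : Fin d → ℝ) : Fin d → ℝ :=
  (g : Matrix (Fin d) (Fin d) ℝ).mulVec v

/-- Orbit of a vector under a subgroup of `GL (Fin d) ℝ`. -/
def orbitOf {d : ℕ} (G : Subgroup (GL (Fin d) ℝ)) (v : Fin d → ℝ) : Set (Fin d → ℝ) :=
  {x | ∃ g ∈ G, act g v = x}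

/-- A quasi-isomorphism: a linear isomorphism sending `G`-orbits to `H`-orbits,
whose inverse sends `H`-orbits to `G`-orbits. -/
def IsQuasiIso {d e : ℕ} (G : Subgroup (GL (Fin d) ℝ)) (H : Subgroup (GL (Fin e) ℝ))
    (L : (Fin d → ℝ) ≃ₗ[ℝ] (Fin e → ℝ)) : Prop :=
  (∀ v : Fin d → ℝ, ∃ w : Fin e → ℝ, ⇑L '' orbitOf G v = orbitOf H w) ∧
  (∀ w : Fin e → ℝ, ∃ v : Fin d → ℝ, ⇑L.symm '' orbitOf H w = orbitOf G v)

/-- `P` is a `G`-invariant polynomial. -/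
def IsInv {d : ℕ} (G : Subgroup (GL (Fin d) ℝ)) (P : MvPolynomial (Fin d) ℝ) : Prop :=
  ∀ g ∈ G, ∀ v : Fin d → ℝ, eval (act g v) P = eval v P

/-- The polynomial map `ℝ^d → ℝ^m` given by a family of polynomials. -/
def evalMap {d m : ℕ} (p : Fin m → MvPolynomial (Fin d) ℝ) (v : Fin d → ℝ) : Fin m → ℝ :=
  fun i => eval v (p i)

/-- Real Zariski closure of a subset of `ℝ^m`: the common zero set of all real
polynomials vanishing identically on `S`. -/
def zarClosure {m : ℕ} (S : Set (Fin m → ℝ)) : Set (Fin m → ℝ) :=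
  {y | ∀ P : MvPolynomial (Fin m) ℝ, (∀ s ∈ S, eval s P = 0) → eval y P = 0}

/-- `G` contains no reflections: every nonidentity element `g` has `rank (g - 1) ≥ 2`. -/
def NoReflections {d : ℕ} (G : Subgroup (GL (Fin d) ℝ)) : Prop :=
  ∀ g ∈ G, g ≠ 1 → 2 ≤ ((g : Matrix (Fin d) (Fin d) ℝ) - 1).rank

lemma act_mul {d : ℕ} (g h : GL (Fin d) ℝ) (v : Fin d → ℝ) :
    act g (act h v) = act (g * h) v := by
  simp [act, Matrix.mulVec_mulVec, Units.val_mul]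

/-- The sum of squared norms of the orbit, as a polynomial. -/
def Qpoly {d : ℕ} (G : Subgroup (GL (Fin d) ℝ)) [Fintype G] : MvPolynomial (Fin d) ℝ :=
  ∑ g : G, ∑ i : Fin d,
    (∑ j : Fin d, C (((g : GL (Fin d) ℝ) : Matrix (Fin d) (Fin d) ℝ) i j) * X j) ^ 2

lemma eval_Qpoly {d : ℕ} (G : Subgroup (GL (Fin d) ℝ)) [Fintype G] (v : Fin d → ℝ) :
    eval v (Qpoly G) = ∑ g : G, ∑ i : Fin d, (act (g : GL (Fin d) ℝ) v i) ^ 2 := by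
  simp [Qpoly, act, Matrix.mulVec, dotProduct]

lemma sq_le_eval_Qpoly {d : ℕ} (G : Subgroup (GL (Fin d) ℝ)) [Fintype G]
    (v : Fin d → ℝ) (i : Fin d) : (v i) ^ 2 ≤ eval v (Qpoly G) := by
  rw [eval_Qpoly]
  have h1 : (v i) ^ 2 = (act ((1 : G) : GL (Fin d) ℝ) v i) ^ 2 := by
    simp [act, Matrix.one_mulVec]
  rw [h1]
  calc (act ((1 : G) : GL (Fin d) ℝ) v i) ^ 2
      ≤ ∑ i : Fin d, (act ((1 : G) : GL (Fin d) ℝ) v i) ^ 2 :=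
        Finset.single_le_sum (f := fun i => (act ((1 : G) : GL (Fin d) ℝ) v i) ^ 2)
          (fun _ _ => sq_nonneg _) (Finset.mem_univ i)
    _ ≤ ∑ g : G, ∑ i : Fin d, (act (g : GL (Fin d) ℝ) v i) ^ 2 :=
        Finset.single_le_sum
          (f := fun g : G => ∑ i : Fin d, (act (g : GL (Fin d) ℝ) v i) ^ 2)
          (fun _ _ => Finset.sum_nonneg fun _ _ => sq_nonneg _) (Finset.mem_univ (1 : G))

lemma Qpoly_isInv {d : ℕ} (G : Subgroup (GL (Fin d) ℝ)) [Fintype G] :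
    IsInv G (Qpoly G) := by
  intro h hh v
  rw [eval_Qpoly, eval_Qpoly]
  have key : ∀ g : G, ∑ i : Fin d, (act (g : GL (Fin d) ℝ) (act h v) i) ^ 2
      = ∑ i : Fin d, (act ((g * (⟨h, hh⟩ : G) : G) : GL (Fin d) ℝ) v i) ^ 2 := by
    intro g
    have hact : act (g : GL (Fin d) ℝ) (act h v)
        = act ((g * (⟨h, hh⟩ : G) : G) : GL (Fin d) ℝ) v := by
      rw [act_mul]; rfl
    simp only [hact]
  calc ∑ g : G, ∑ i : Fin d, (act (g : GL (Fin d) ℝ) (act h v) i) ^ 2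
      = ∑ g : G, ∑ i : Fin d, (act ((g * (⟨h, hh⟩ : G) : G) : GL (Fin d) ℝ) v i) ^ 2 :=
        Finset.sum_congr rfl fun g _ => key g
    _ = ∑ g : G, ∑ i : Fin d, (act (g : GL (Fin d) ℝ) v i) ^ 2 :=
        Fintype.sum_equiv (Equiv.mulRight (⟨h, hh⟩ : G)) _ _ (fun g => rfl)

lemma aeval_self' {σ : Type*} (w : σ → ℝ) (P : MvPolynomial σ ℝ) :
    aeval (R := ℝ) w P = eval w P := by
  rw [← coe_aeval_eq_eval]; rfl

lemma eval_aeval' {d m : ℕ} (p : Fin m → MvPolynomial (Fin d) ℝ)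
    (F : MvPolynomial (Fin m) ℝ) (w : Fin d → ℝ) :
    eval w (aeval p F) = eval (evalMap p w) F := by
  have h := comp_aeval_apply (f := p) (aeval (R := ℝ) w) F
  simp only [aeval_self'] at h
  exact h

/-- the image `Y₀ = p(ℝ^d)` is closed in `ℝ^m`. -/
theorem stmt_14 (d m : ℕ) (G : Subgroup (GL (Fin d) ℝ)) [Finite G]
    (p : Fin m → MvPolynomial (Fin d) ℝ) (dd : Fin m → ℕ)
    (hphom : ∀ i, (p i).IsHomogeneous (dd i))
    (hpgen : ∀ P, IsInv G P ↔ P ∈ Algebra.adjoin ℝ (Set.range p)) :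
    IsClosed (Set.range (evalMap p)) := by
  have : Fintype G := Fintype.ofFinite G
  -- Q is invariant, hence a polynomial in the `p i`.
  obtain ⟨F, hF⟩ : ∃ F : MvPolynomial (Fin m) ℝ, aeval p F = Qpoly G := by
    have hmem := (hpgen (Qpoly G)).mp (Qpoly_isInv G)
    rw [Algebra.adjoin_range_eq_range_aeval] at hmem
    exact hmem
  have hcont : Continuous (evalMap p) :=
    continuous_pi fun i => MvPolynomial.continuous_eval (p i)
  rw [← isSeqClosed_iff_isClosed]
  intro u y hu huy
  choose v hv using hu
  -- the values of Q along the sequence are bounded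
  have hQalong : ∀ n, eval (v n) (Qpoly G) = eval (u n) F := by
    intro n
    rw [← hF, eval_aeval', hv]
  have htend : Filter.Tendsto (fun n => eval (u n) F) Filter.atTop
      (nhds (eval y F)) :=
    ((MvPolynomial.continuous_eval F).tendsto y).comp huy
  obtain ⟨C, hC⟩ := htend.bddAbove_range
  have hCb : ∀ n, eval (v n) (Qpoly G) ≤ C := fun n => by
    rw [hQalong n]; exact hC (Set.mem_range_self n)
  -- hence the sequence `v` is bounded
  have hbound : Bornology.IsBounded (Set.range v) := by
    rw [isBounded_iff_forall_norm_le]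
    refine ⟨Real.sqrt C, ?_⟩
    rintro _ ⟨n, rfl⟩
    rw [pi_norm_le_iff_of_nonneg (Real.sqrt_nonneg C)]
    intro i
    rw [Real.norm_eq_abs]
    exact Real.abs_le_sqrt ((sq_le_eval_Qpoly G (v n) i).trans (hCb n))
  obtain ⟨x, -, φ, hφ, hx⟩ :=
    tendsto_subseq_of_bounded hbound (fun n => Set.mem_range_self (f := v) n)
  refine ⟨x, ?_⟩
  have h1 : Filter.Tendsto (fun n => evalMap p (v (φ n))) Filter.atTop
      (nhds (evalMap p x)) := (hcont.tendsto x).comp hx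
  have h2 : Filter.Tendsto (fun n => evalMap p (v (φ n))) Filter.atTop (nhds y) := by
    have := huy.comp hφ.tendsto_atTop
    simpa [Function.comp_def, hv] using this
  exact tendsto_nhds_unique h1 h2
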